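/- Let R > 0 and let Ψ : ℂ → ℂ be holomorphic on {z ∈ ℂ : |z| > R} with Ψ(z)/z → 1 as |z| → ∞. Let n ≥ 0 be an integer, F a complex polynomial, and (c_k)_{k≥1} complex numbers such that for every z with |z| > R the series Σ_{k≥1} c_k z^{−k} converges unconditionally (HasSum) with sum F(Ψ(z)) − z^n. Let ρ > R and let w ∈ ℂ be such that Ψ(z) ≠ w for every z with |z| ≥ ρ. Then the circle integral ∮_{|z|=ρ} z^n · Ψ′(z)/(Ψ(z) − w) dz equals 2πi · F(w). -/

import Mathlib

set_option maxHeartbeats 2000000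

open Filter Metric Set

open Metric Set Complex Polynomial in
/-- Every polynomial over ℂ has a polynomial antiderivative. -/
private lemma exists_poly_antideriv (Q : Polynomial ℂ) :
    ∃ P : Polynomial ℂ, P.derivative = Q := by
  induction Q using Polynomial.induction_on' with
  | add p q hp hq =>
    obtain ⟨P, hP⟩ := hp; obtain ⟨P', hP'⟩ := hq
    exact ⟨P + P', by simp [hP, hP']⟩
  | monomial n a =>
    refine ⟨Polynomial.monomial (n + 1) (a / (n + 1)), ?_⟩
    have hne : ((n : ℂ) + 1) ≠ 0 := Nat.cast_add_one_ne_zero n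
    rw [Polynomial.derivative_monomial]
    push_cast
    rw [div_mul_cancel₀ _ hne]

/-- The circle integral of the derivative of a function holomorphic near the circle is zero. -/
private lemma circleIntegral_deriv_eq_zero {f f' : ℂ → ℂ} {r : ℝ} (hr : 0 ≤ r)
    (h : ∀ z ∈ sphere (0 : ℂ) r, HasDerivAt f (f' z) z)
    (hc : ContinuousOn f' (sphere (0 : ℂ) r)) :
    (∮ z in C(0, r), f' z) = 0 := by
  have key : ∀ θ ∈ Set.uIcc (0 : ℝ) (2 * Real.pi),
      HasDerivAt (fun t => f (circleMap 0 r t))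
        (deriv (circleMap 0 r) θ • f' (circleMap 0 r θ)) θ := by
    intro θ _
    have h1 := hasDerivAt_circleMap 0 r θ
    have h2 := (h _ (circleMap_mem_sphere 0 hr θ)).comp θ h1
    simpa [deriv_circleMap, smul_eq_mul, mul_comm, Function.comp_def] using h2
  have hint : IntervalIntegrable (fun θ => deriv (circleMap 0 r) θ • f' (circleMap 0 r θ))
      MeasureTheory.volume 0 (2 * Real.pi) := by
    apply ContinuousOn.intervalIntegrable
    apply ContinuousOn.fun_smul
    · have : Continuous fun θ => deriv (circleMap 0 r) θ := by
        simp only [deriv_circleMap]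
        exact (continuous_circleMap 0 r).mul continuous_const
      exact this.continuousOn
    · exact hc.comp (continuous_circleMap 0 r).continuousOn
        fun θ _ => circleMap_mem_sphere 0 hr θ
  rw [circleIntegral, intervalIntegral.integral_eq_sub_of_hasDerivAt key hint]
  have hper : circleMap 0 r (2 * Real.pi) = circleMap 0 r 0 := by
    simpa using (periodic_circleMap 0 r) 0
  rw [hper, sub_self]

/-- The Cauchy-type circle integral of `z^n Ψ'(z)/(Ψ(z) - w)` over `|z| = ρ` equals
`2πi` times the value at `w` of the `n`-th Faber polynomial `F` of `Ψ`. -/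
theorem circleIntegral_faber_polynomial
    (R : ℝ) (hR : 0 < R) (Ψ : ℂ → ℂ)
    (hΨ : DifferentiableOn ℂ Ψ {z : ℂ | R < ‖z‖})
    (hlim : Tendsto (fun z : ℂ => Ψ z / z) (comap norm atTop) (nhds 1))
    (n : ℕ) (F : Polynomial ℂ) (c : ℕ → ℂ)
    (hser : ∀ z : ℂ, R < ‖z‖ →
      HasSum (fun k : ℕ => c (k + 1) / z ^ (k + 1)) (F.eval (Ψ z) - z ^ n))
    (ρ : ℝ) (hρ : R < ρ) (w : ℂ)
    (hw : ∀ z : ℂ, ρ ≤ ‖z‖ → Ψ z ≠ w) :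
    (∮ z in C(0, ρ), z ^ n * deriv Ψ z / (Ψ z - w)) =
      2 * Real.pi * Complex.I * F.eval w := by
  -- setup
  have hρ0 : (0 : ℝ) < ρ := hR.trans hρ
  have hU : IsOpen {z : ℂ | R < ‖z‖} := isOpen_lt continuous_const continuous_norm
  have hΨ' : DifferentiableOn ℂ (deriv Ψ) {z : ℂ | R < ‖z‖} :=
    ((hΨ.analyticOnNhd hU).deriv).differentiableOn
  set L : Filter ℂ := comap norm atTop with hL
  have hnorm : Tendsto (fun z : ℂ => ‖z‖) L atTop := tendsto_comap
  have hlarge : ∀ m : ℝ, ∀ᶠ z : ℂ in L, m ≤ ‖z‖ := fun m =>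
    hnorm.eventually (eventually_ge_atTop m)
  have hextract : ∀ {p : ℂ → Prop}, (∀ᶠ z in L, p z) → ∃ m : ℝ, ∀ z : ℂ, m ≤ ‖z‖ → p z := by
    intro p hp
    rw [hL, Filter.eventually_comap, Filter.eventually_atTop] at hp
    obtain ⟨m, hm⟩ := hp
    exact ⟨m, fun z hz => hm ‖z‖ hz z rfl⟩
  -- E1 : Ψ z - z is small
  have E1 : ∀ δ : ℝ, 0 < δ → ∀ᶠ z : ℂ in L, ‖Ψ z - z‖ ≤ δ * ‖z‖ := by
    intro δ hδ
    filter_upwards [Metric.tendsto_nhds.mp hlim δ hδ, hlarge 1] with z h1 h2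
    have hz0 : z ≠ 0 := by
      intro h; rw [h] at h2; simp at h2; linarith
    have : Ψ z - z = (Ψ z / z - 1) * z := by field_simp
    rw [this, norm_mul]
    have h1' : ‖Ψ z / z - 1‖ ≤ δ := by rw [← dist_eq_norm]; exact h1.le
    exact mul_le_mul_of_nonneg_right h1' (norm_nonneg _)
  -- E2 : deriv Ψ z is close to 1 (Cauchy estimate)
  have E2 : ∀ δ : ℝ, 0 < δ → ∀ᶠ z : ℂ in L, ‖deriv Ψ z - 1‖ ≤ δ := by
    intro δ hδ
    obtain ⟨m₀, hm₀⟩ := hextract (E1 (δ / 8) (by linarith))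
    filter_upwards [hlarge (3 * R), hlarge (3 * (max m₀ 0)), hlarge 3] with z hz1 hz2 hz3
    have hz0 : (0 : ℝ) < ‖z‖ := by linarith
    set d : ℝ := ‖z‖ / 3 with hd
    have hd0 : 0 < d := by positivity
    have hball : closedBall z d ⊆ {z : ℂ | R < ‖z‖} := by
      intro ζ hζ
      have h1 : ‖ζ - z‖ ≤ d := by simpa [dist_eq_norm] using hζ
      have h2 : ‖z‖ - ‖ζ‖ ≤ ‖z - ζ‖ := norm_sub_norm_le z ζ
      rw [norm_sub_rev] at h2
      simp only [Set.mem_setOf_eq]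
      rw [hd] at h1
      linarith
    have hdiff : DiffContOnCl ℂ (fun ζ => Ψ ζ - ζ) (ball z d) := by
      apply DifferentiableOn.diffContOnCl
      rw [closure_ball z hd0.ne']
      exact ((hΨ.sub differentiableOn_id).mono hball)
    have hsph : ∀ ζ ∈ sphere z d, ‖Ψ ζ - ζ‖ ≤ δ / 8 * (4 / 3 * ‖z‖) := by
      intro ζ hζ
      have hζd : ‖ζ - z‖ = d := by simpa [dist_eq_norm] using hζ
      have hlo : ‖z‖ - d ≤ ‖ζ‖ := by
        have h2 := norm_sub_norm_le z ζ
        rw [norm_sub_rev, hζd] at h2; linarith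
      have hhi : ‖ζ‖ ≤ ‖z‖ + d := by
        calc ‖ζ‖ = ‖z + (ζ - z)‖ := by congr 1; ring
          _ ≤ ‖z‖ + ‖ζ - z‖ := norm_add_le _ _
          _ = ‖z‖ + d := by rw [hζd]
      have hm : m₀ ≤ ‖ζ‖ := by
        have h1 : m₀ ≤ max m₀ 0 := le_max_left _ _
        have h2 : (0:ℝ) ≤ max m₀ 0 := le_max_right _ _
        rw [hd] at hlo
        linarith
      have := hm₀ ζ hm
      calc ‖Ψ ζ - ζ‖ ≤ δ / 8 * ‖ζ‖ := this
        _ ≤ δ / 8 * (4 / 3 * ‖z‖) := by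
            apply mul_le_mul_of_nonneg_left _ (by linarith)
            rw [hd] at hhi; linarith
    have hcd := Complex.norm_deriv_le_of_forall_mem_sphere_norm_le hd0 hdiff hsph
    have hderiv_eq : deriv (fun ζ => Ψ ζ - ζ) z = deriv Ψ z - 1 := by
      have hΨz : DifferentiableAt ℂ Ψ z := hΨ.differentiableAt
        (hU.mem_nhds (by simp only [Set.mem_setOf_eq]; linarith))
      rw [deriv_fun_sub hΨz differentiableAt_fun_id]
      simp
    rw [hderiv_eq] at hcd
    calc ‖deriv Ψ z - 1‖ ≤ δ / 8 * (4 / 3 * ‖z‖) / d := hcd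
      _ = δ / 2 := by
          rw [hd, div_eq_iff (ne_of_gt (by positivity : (0:ℝ) < ‖z‖ / 3))]
          ring
      _ ≤ δ := by linarith
  -- E3 : bound on the series tail S z = F.eval (Ψ z) - z ^ n
  set ρ' : ℝ := (R + ρ) / 2 with hρ'
  have hρ'R : R < ρ' := by rw [hρ']; linarith
  have hρ'0 : 0 < ρ' := hR.trans hρ'R
  have hz₀ : ‖((ρ' : ℝ) : ℂ)‖ = ρ' := by
    rw [Complex.norm_real, Real.norm_eq_abs, abs_of_pos hρ'0]
  have hsum₀ := hser ((ρ' : ℝ) : ℂ) (by rw [hz₀]; exact hρ'R)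
  obtain ⟨M, hM⟩ : ∃ M : ℝ, ∀ k : ℕ, ‖c (k + 1) / ((ρ' : ℝ) : ℂ) ^ (k + 1)‖ ≤ M := by
    have ht : Tendsto (fun k : ℕ => ‖c (k + 1) / ((ρ' : ℝ) : ℂ) ^ (k + 1)‖) atTop (nhds 0) := by
      simpa using (hsum₀.summable.tendsto_atTop_zero).norm
    obtain ⟨M, hM⟩ := ht.bddAbove_range
    exact ⟨M, fun k => hM (Set.mem_range_self k)⟩
  have hM0 : 0 ≤ M := le_trans (norm_nonneg _) (hM 0)
  have hMk : ∀ k : ℕ, ‖c (k + 1)‖ ≤ M * ρ' ^ (k + 1) := by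
    intro k
    have := hM k
    rw [norm_div, norm_pow, hz₀, div_le_iff₀ (by positivity)] at this
    linarith [this]
  set Cs : ℝ := 2 * M * ρ' with hCs
  have hCs0 : 0 ≤ Cs := by positivity
  have E3 : ∀ᶠ z : ℂ in L, ‖F.eval (Ψ z) - z ^ n‖ ≤ Cs / ‖z‖ := by
    filter_upwards [hlarge (2 * ρ'), hlarge (R + 1)] with z hz1 hz2
    have hz0 : (0 : ℝ) < ‖z‖ := by linarith
    have hRz : R < ‖z‖ := by linarith
    set q : ℝ := ρ' / ‖z‖ with hq
    have hq0 : 0 ≤ q := by positivity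
    have hqhalf : q ≤ 1 / 2 := by
      rw [hq, div_le_div_iff₀ hz0 (by norm_num)]; linarith
    have hq1 : q < 1 := by linarith
    have hgeom : HasSum (fun k : ℕ => M * q ^ (k + 1)) (M * q * (1 - q)⁻¹) := by
      have h := (hasSum_geometric_of_lt_one hq0 hq1).mul_left (M * q)
      have he : (fun k : ℕ => M * q * q ^ k) = fun k : ℕ => M * q ^ (k + 1) := by
        funext k; rw [pow_succ]; ring
      rwa [he] at h
    have hterm : ∀ k : ℕ, ‖c (k + 1) / z ^ (k + 1)‖ ≤ M * q ^ (k + 1) := by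
      intro k
      rw [norm_div, norm_pow]
      have he : M * q ^ (k + 1) = M * ρ' ^ (k + 1) / ‖z‖ ^ (k + 1) := by
        rw [hq, div_pow]; ring
      rw [he]
      gcongr
      exact hMk k
    have hnorm_le : ‖F.eval (Ψ z) - z ^ n‖ ≤ M * q * (1 - q)⁻¹ := by
      rw [← (hser z hRz).tsum_eq]
      exact tsum_of_norm_bounded hgeom hterm
    calc ‖F.eval (Ψ z) - z ^ n‖ ≤ M * q * (1 - q)⁻¹ := hnorm_le
      _ ≤ M * q * 2 := by
          apply mul_le_mul_of_nonneg_left _ (by positivity)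
          have h2 : (1:ℝ) ≤ 2 * (1 - q) := by linarith
          rw [inv_le_iff_one_le_mul₀ (by linarith)]
          linarith
      _ = Cs / ‖z‖ := by rw [hCs, hq]; field_simp
  -- E4 : lower bound on ‖Ψ z - w‖
  have E4 : ∀ᶠ z : ℂ in L, ‖z‖ / 2 ≤ ‖Ψ z - w‖ := by
    filter_upwards [E1 (1/4) (by norm_num), hlarge (4 * ‖w‖), hlarge 1] with z h1 h2 h3
    have e : z = (Ψ z - w) - ((Ψ z - z) - w) := by ring
    have h5 : ‖z‖ ≤ ‖Ψ z - w‖ + ‖(Ψ z - z) - w‖ := by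
      calc ‖z‖ = ‖(Ψ z - w) - ((Ψ z - z) - w)‖ := congrArg norm e
        _ ≤ ‖Ψ z - w‖ + ‖(Ψ z - z) - w‖ := norm_sub_le _ _
    have h6 : ‖(Ψ z - z) - w‖ ≤ ‖Ψ z - z‖ + ‖w‖ := norm_sub_le _ _
    have h7 : ‖w‖ ≤ ‖z‖ / 4 := by linarith
    have h8 : ‖Ψ z - z‖ ≤ 1 / 4 * ‖z‖ := h1
    linarith
  -- the quotient polynomial Q with F - F(w) = (X - w) Q
  obtain ⟨Q, hQ⟩ := Polynomial.X_sub_C_dvd_sub_C_eval (a := w) (p := F)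
  have hQeval : ∀ u : ℂ, F.eval u - F.eval w = (u - w) * Q.eval u := by
    intro u
    have := congrArg (Polynomial.eval u) hQ
    simpa using this
  -- the auxiliary function g and its differentiability
  set V : Set ℂ := {z : ℂ | R < ‖z‖} ∩ Ψ ⁻¹' {w}ᶜ with hV
  have hVopen : IsOpen V := hΨ.continuousOn.isOpen_inter_preimage hU isOpen_compl_singleton
  have hVmem : ∀ z : ℂ, ρ ≤ ‖z‖ → z ∈ V := by
    intro z hz
    refine ⟨by simp only [Set.mem_setOf_eq]; linarith, ?_⟩
    simpa using hw z hz
  set g : ℂ → ℂ := fun z =>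
    z ^ n * deriv Ψ z / (Ψ z - w) - F.eval w * z⁻¹ - Q.eval (Ψ z) * deriv Ψ z with hg
  have hVprop : ∀ z ∈ V, R < ‖z‖ ∧ Ψ z ≠ w ∧ z ≠ 0 := by
    intro z hz
    obtain ⟨h1, h2⟩ := hz
    refine ⟨h1, by simpa using h2, ?_⟩
    intro h
    rw [h] at h1
    simp at h1
    linarith
  have hgdiff : ∀ z ∈ V, DifferentiableAt ℂ g z := by
    intro z hz
    obtain ⟨h1, h2, h3⟩ := hVprop z hz
    have hmem : {z : ℂ | R < ‖z‖} ∈ nhds z := hU.mem_nhds h1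
    have hΨz : DifferentiableAt ℂ Ψ z := hΨ.differentiableAt hmem
    have hΨ'z : DifferentiableAt ℂ (deriv Ψ) z := hΨ'.differentiableAt hmem
    apply DifferentiableAt.sub
    apply DifferentiableAt.sub
    · exact ((differentiableAt_fun_id.fun_pow n).mul hΨ'z).div (hΨz.sub_const w) (sub_ne_zero.2 h2)
    · exact (differentiableAt_const _).mul (differentiableAt_inv h3)
    · exact ((Q.differentiableAt).comp z hΨz).mul hΨ'z
  have hHdiff : ∀ z ∈ V, DifferentiableAt ℂ (fun z => z ^ n * deriv Ψ z / (Ψ z - w)) z := by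
    intro z hz
    obtain ⟨h1, h2, h3⟩ := hVprop z hz
    have hmem : {z : ℂ | R < ‖z‖} ∈ nhds z := hU.mem_nhds h1
    exact ((differentiableAt_fun_id.fun_pow n).mul (hΨ'.differentiableAt hmem)).div
      ((hΨ.differentiableAt hmem).sub_const w) (sub_ne_zero.2 h2)
  -- identity for g on V
  have hgid : ∀ z ∈ V, g z = F.eval w * (deriv Ψ z / (Ψ z - w) - z⁻¹) -
      (F.eval (Ψ z) - z ^ n) * (deriv Ψ z / (Ψ z - w)) := by
    intro z hz
    obtain ⟨h1, h2, h3⟩ := hVprop z hz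
    have hQz : Q.eval (Ψ z) = (F.eval (Ψ z) - F.eval w) / (Ψ z - w) :=
      (eq_div_iff (sub_ne_zero.2 h2)).mpr (by rw [mul_comm]; exact (hQeval (Ψ z)).symm)
    simp only [hg]
    rw [hQz]
    field_simp [sub_ne_zero.2 h2, h3]
    ring
  -- constancy of the circle integral of g in the radius
  have hconst : ∀ r : ℝ, ρ ≤ r → (∮ z in C(0, r), g z) = ∮ z in C(0, ρ), g z := by
    intro r hr
    apply Complex.circleIntegral_eq_of_differentiable_on_annulus_off_countable hρ0 hr
      Set.countable_empty
    · intro z hz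
      have : ρ ≤ ‖z‖ := by
        have := hz.2
        rw [mem_ball_zero_iff] at this
        push_neg at this
        exact this
      exact ((hgdiff z (hVmem z this)).continuousAt).continuousWithinAt
    · intro z hz
      have : ρ ≤ ‖z‖ := by
        have := hz.1.2
        rw [mem_closedBall_zero_iff] at this
        push_neg at this
        linarith [this]
      exact hgdiff z (hVmem z this)
  -- the constant value is 0
  have hgzero : (∮ z in C(0, ρ), g z) = 0 := by
    set a : ℂ := ∮ z in C(0, ρ), g z with ha
    have hsmall : ∀ ε : ℝ, 0 < ε → ‖a‖ ≤ ε := by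
      intro ε hε
      set ε' : ℝ := ε / 7 with hε'
      have hε'0 : 0 < ε' := by positivity
      set δ : ℝ := min 1 (ε' / (12 * (‖F.eval w‖ + 1))) with hδ
      have hδ0 : 0 < δ := by
        rw [hδ]; positivity
      have hδ1 : δ ≤ 1 := by rw [hδ]; exact min_le_left _ _
      have hδle : δ ≤ ε' / (12 * (‖F.eval w‖ + 1)) := by rw [hδ]; exact min_le_right _ _
      have hbound : ∀ᶠ z : ℂ in L, ‖g z‖ ≤ ε' / ‖z‖ := by
        filter_upwards [E1 δ hδ0, E2 δ hδ0, E3, E4, hlarge (max ρ 1),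
          hlarge (8 * Cs / ε' + 1), hlarge (‖w‖ / δ)] with z h1 h2 h3 h4 h5 h6 h7
        have hz1 : ρ ≤ ‖z‖ := le_trans (le_max_left _ _) h5
        have hzV := hVmem z hz1
        obtain ⟨hU1, hU2, hU3⟩ := hVprop z hzV
        have hz0 : (0 : ℝ) < ‖z‖ := by
          have := le_trans (le_max_right _ _) h5; linarith
        have hΨw0 : Ψ z - w ≠ 0 := sub_ne_zero.2 hU2
        -- bound for deriv Ψ z
        have hd2 : ‖deriv Ψ z‖ ≤ 1 + δ := by
          calc ‖deriv Ψ z‖ = ‖(deriv Ψ z - 1) + 1‖ := by congr 1; ring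
            _ ≤ ‖deriv Ψ z - 1‖ + 1 := by
                simpa using norm_add_le (deriv Ψ z - 1) 1
            _ ≤ δ + 1 := by linarith
            _ = 1 + δ := by ring
        -- bound for the first piece
        have hfrac : deriv Ψ z / (Ψ z - w) - z⁻¹ =
            (z * deriv Ψ z - (Ψ z - w)) / (z * (Ψ z - w)) := by
          field_simp
        have hnum : ‖z * deriv Ψ z - (Ψ z - w)‖ ≤ 3 * δ * ‖z‖ := by
          have : z * deriv Ψ z - (Ψ z - w) = z * (deriv Ψ z - 1) - (Ψ z - z) + w := by ring
          rw [this]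
          calc ‖z * (deriv Ψ z - 1) - (Ψ z - z) + w‖
              ≤ ‖z * (deriv Ψ z - 1) - (Ψ z - z)‖ + ‖w‖ := norm_add_le _ _
            _ ≤ ‖z * (deriv Ψ z - 1)‖ + ‖Ψ z - z‖ + ‖w‖ := by
                linarith [norm_sub_le (z * (deriv Ψ z - 1)) (Ψ z - z)]
            _ ≤ ‖z‖ * δ + δ * ‖z‖ + δ * ‖z‖ := by
                have hn1 : ‖z * (deriv Ψ z - 1)‖ = ‖z‖ * ‖deriv Ψ z - 1‖ := norm_mul _ _
                have hw' : ‖w‖ ≤ δ * ‖z‖ := by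
                  rw [div_le_iff₀ hδ0] at h7
                  linarith [h7]
                have : ‖z‖ * ‖deriv Ψ z - 1‖ ≤ ‖z‖ * δ :=
                  mul_le_mul_of_nonneg_left h2 (norm_nonneg _)
                linarith [hn1 ▸ this]
            _ = 3 * δ * ‖z‖ := by ring
        have hden : ‖z‖ * (‖z‖ / 2) ≤ ‖z * (Ψ z - w)‖ := by
          rw [norm_mul]
          exact mul_le_mul_of_nonneg_left h4 (norm_nonneg _)
        have hΨwpos : (0:ℝ) < ‖Ψ z - w‖ := lt_of_lt_of_le (by positivity) h4
        have hzw : (0:ℝ) < ‖z * (Ψ z - w)‖ := by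
          rw [norm_mul]; exact mul_pos hz0 hΨwpos
        have hfirst : ‖deriv Ψ z / (Ψ z - w) - z⁻¹‖ ≤ 6 * δ / ‖z‖ := by
          rw [hfrac, norm_div]
          rw [div_le_div_iff₀ hzw hz0]
          calc ‖z * deriv Ψ z - (Ψ z - w)‖ * ‖z‖ ≤ 3 * δ * ‖z‖ * ‖z‖ :=
              mul_le_mul_of_nonneg_right hnum (norm_nonneg _)
            _ = 6 * δ * (‖z‖ * (‖z‖ / 2)) := by ring
            _ ≤ 6 * δ * ‖z * (Ψ z - w)‖ := by
                apply mul_le_mul_of_nonneg_left hden (by positivity)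
        -- bound for the second piece
        have hsecond : ‖deriv Ψ z / (Ψ z - w)‖ ≤ 4 / ‖z‖ := by
          rw [norm_div, div_le_div_iff₀ hΨwpos hz0]
          calc ‖deriv Ψ z‖ * ‖z‖ ≤ (1 + δ) * ‖z‖ :=
              mul_le_mul_of_nonneg_right hd2 (norm_nonneg _)
            _ ≤ 2 * ‖z‖ := by nlinarith [hz0.le]
            _ = 4 * (‖z‖ / 2) := by ring
            _ ≤ 4 * ‖Ψ z - w‖ := by linarith
        -- combine
        rw [hgid z hzV]
        calc ‖F.eval w * (deriv Ψ z / (Ψ z - w) - z⁻¹) -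
              (F.eval (Ψ z) - z ^ n) * (deriv Ψ z / (Ψ z - w))‖
            ≤ ‖F.eval w‖ * ‖deriv Ψ z / (Ψ z - w) - z⁻¹‖ +
              ‖F.eval (Ψ z) - z ^ n‖ * ‖deriv Ψ z / (Ψ z - w)‖ := by
              calc _ ≤ ‖F.eval w * (deriv Ψ z / (Ψ z - w) - z⁻¹)‖ +
                  ‖(F.eval (Ψ z) - z ^ n) * (deriv Ψ z / (Ψ z - w))‖ := norm_sub_le _ _
                _ = _ := by rw [norm_mul, norm_mul]
          _ ≤ ‖F.eval w‖ * (6 * δ / ‖z‖) + (Cs / ‖z‖) * (4 / ‖z‖) := by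
              have t1 : ‖F.eval w‖ * ‖deriv Ψ z / (Ψ z - w) - z⁻¹‖ ≤
                  ‖F.eval w‖ * (6 * δ / ‖z‖) :=
                mul_le_mul_of_nonneg_left hfirst (norm_nonneg _)
              have t2 : ‖F.eval (Ψ z) - z ^ n‖ * ‖deriv Ψ z / (Ψ z - w)‖ ≤
                  (Cs / ‖z‖) * (4 / ‖z‖) :=
                mul_le_mul h3 hsecond (norm_nonneg _) (by positivity)
              linarith
          _ ≤ ε' / 2 / ‖z‖ + ε' / 2 / ‖z‖ := by
              have hD : (0:ℝ) < 12 * (‖F.eval w‖ + 1) := by positivity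
              have hδD : δ * (12 * (‖F.eval w‖ + 1)) ≤ ε' := by
                rw [← le_div_iff₀ hD]; exact hδle
              have t1 : ‖F.eval w‖ * (6 * δ) ≤ ε' / 2 := by
                nlinarith [norm_nonneg (F.eval w), hδ0.le]
              have t2 : Cs * 4 ≤ ε' / 2 * ‖z‖ := by
                have hz6 : 8 * Cs / ε' ≤ ‖z‖ := by linarith
                rw [div_le_iff₀ hε'0] at hz6
                nlinarith [hε'0.le]
              have e1 : ‖F.eval w‖ * (6 * δ / ‖z‖) = ‖F.eval w‖ * (6 * δ) / ‖z‖ := by ring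
              have e2 : Cs / ‖z‖ * (4 / ‖z‖) = Cs * 4 / ‖z‖ / ‖z‖ := by ring
              rw [e1, e2]
              have t2' : Cs * 4 / ‖z‖ ≤ ε' / 2 := by
                rw [div_le_iff₀ hz0]; linarith
              gcongr
          _ = ε' / ‖z‖ := by ring
      obtain ⟨m, hm⟩ := hextract hbound
      set r : ℝ := max (max ρ m) 1 with hr
      have hrρ : ρ ≤ r := le_trans (le_max_left _ _) (le_max_left _ _)
      have hr0 : (0 : ℝ) < r := lt_of_lt_of_le one_pos (le_max_right _ _)
      have hrm : m ≤ r := le_trans (le_max_right _ _) (le_max_left _ _)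
      have hkey : ∀ z ∈ sphere (0 : ℂ) r, ‖g z‖ ≤ ε' / r := by
        intro z hz
        rw [mem_sphere_zero_iff_norm] at hz
        have := hm z (by rw [hz]; exact hrm)
        rwa [hz] at this
      have := circleIntegral.norm_integral_le_of_norm_le_const hr0.le hkey
      rw [hconst r hrρ] at this
      calc ‖a‖ ≤ 2 * Real.pi * r * (ε' / r) := this
        _ = 2 * Real.pi * ε' := by
            rw [mul_assoc]
            congr 1
            field_simp
        _ ≤ 7 * ε' := by
            have := Real.pi_lt_d2
            nlinarith [hε'0.le]
        _ = ε := by rw [hε']; ring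
    by_contra hne
    have h0 : 0 < ‖a‖ := norm_pos_iff.mpr hne
    have := hsmall (‖a‖ / 2) (by linarith)
    linarith
  -- integrability on the circle of radius ρ
  have hsphereV : ∀ z ∈ sphere (0 : ℂ) ρ, z ∈ V := by
    intro z hz
    rw [mem_sphere_zero_iff_norm] at hz
    exact hVmem z (by rw [hz])
  have hcont : ∀ {f : ℂ → ℂ}, (∀ z ∈ V, DifferentiableAt ℂ f z) → CircleIntegrable f 0 ρ := by
    intro f hf
    apply ContinuousOn.circleIntegrable hρ0.le
    intro z hz
    exact ((hf z (hsphereV z hz)).continuousAt).continuousWithinAt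
  have hint1 : CircleIntegrable (fun z => z ^ n * deriv Ψ z / (Ψ z - w)) 0 ρ := hcont hHdiff
  have hint2 : CircleIntegrable (fun z => Polynomial.eval w F * z⁻¹) 0 ρ := by
    apply hcont
    intro z hz
    exact (differentiableAt_const _).mul (differentiableAt_inv (hVprop z hz).2.2)
  have hint3 : CircleIntegrable (fun z => Q.eval (Ψ z) * deriv Ψ z) 0 ρ := by
    apply hcont
    intro z hz
    obtain ⟨h1, h2, h3⟩ := hVprop z hz
    have hmem : {z : ℂ | R < ‖z‖} ∈ nhds z := hU.mem_nhds h1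
    exact ((Q.differentiableAt).comp z (hΨ.differentiableAt hmem)).mul
      (hΨ'.differentiableAt hmem)
  -- split the integral
  have hsplit : (∮ z in C(0, ρ), g z) =
      (∮ z in C(0, ρ), z ^ n * deriv Ψ z / (Ψ z - w)) -
      (∮ z in C(0, ρ), Polynomial.eval w F * z⁻¹) -
      (∮ z in C(0, ρ), Q.eval (Ψ z) * deriv Ψ z) := by
    have h12 : CircleIntegrable
        (fun z => z ^ n * deriv Ψ z / (Ψ z - w) - Polynomial.eval w F * z⁻¹) 0 ρ := by
      apply hcont
      intro z hz
      exact (hHdiff z hz).sub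
        ((differentiableAt_const _).mul (differentiableAt_inv (hVprop z hz).2.2))
    have e1 : (∮ z in C(0, ρ),
        ((z ^ n * deriv Ψ z / (Ψ z - w) - Polynomial.eval w F * z⁻¹) -
          Q.eval (Ψ z) * deriv Ψ z)) =
        (∮ z in C(0, ρ), (z ^ n * deriv Ψ z / (Ψ z - w) - Polynomial.eval w F * z⁻¹)) -
        ∮ z in C(0, ρ), Q.eval (Ψ z) * deriv Ψ z :=
      circleIntegral.integral_sub h12 hint3
    have e2 : (∮ z in C(0, ρ),
        (z ^ n * deriv Ψ z / (Ψ z - w) - Polynomial.eval w F * z⁻¹)) =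
        (∮ z in C(0, ρ), z ^ n * deriv Ψ z / (Ψ z - w)) -
        ∮ z in C(0, ρ), Polynomial.eval w F * z⁻¹ :=
      circleIntegral.integral_sub hint1 hint2
    rw [hg, e1, e2]
  -- the inverse integral
  have hinv : (∮ z in C(0, ρ), Polynomial.eval w F * z⁻¹) =
      Polynomial.eval w F * (2 * Real.pi * Complex.I) := by
    rw [circleIntegral.integral_const_mul]
    congr 1
    have := circleIntegral.integral_sub_inv_of_mem_ball (Metric.mem_ball_self hρ0 : (0:ℂ) ∈ ball 0 ρ)
    simpa using this
  -- the derivative integral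
  have hQint : (∮ z in C(0, ρ), Q.eval (Ψ z) * deriv Ψ z) = 0 := by
    obtain ⟨P, hP⟩ := exists_poly_antideriv Q
    apply circleIntegral_deriv_eq_zero hρ0.le (f := fun z => P.eval (Ψ z))
    · intro z hz
      have hzV := hsphereV z hz
      obtain ⟨h1, _, _⟩ := hVprop z hzV
      have hΨz : DifferentiableAt ℂ Ψ z := hΨ.differentiableAt (hU.mem_nhds h1)
      have := (P.hasDerivAt (Ψ z)).comp z hΨz.hasDerivAt
      rw [hP] at this
      exact this
    · intro z hz
      have hzV := hsphereV z hz
      obtain ⟨h1, _, _⟩ := hVprop z hzV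
      have hmem : {z : ℂ | R < ‖z‖} ∈ nhds z := hU.mem_nhds h1
      exact (((Q.differentiableAt).comp z (hΨ.differentiableAt hmem)).mul
        (hΨ'.differentiableAt hmem)).continuousAt.continuousWithinAt
  rw [hgzero, hinv, hQint] at hsplit
  linear_combination -hsplit
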